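/- arXiv:2010.05561 — 2 statements merged into one kernel-verified Lean document; each statement's English description precedes it below -/
import Mathlib

section
/- Let 0 < α < d, 1 ≤ p < d/α, and f ∈ L^p(ℝ^d) be nonnegative. If x ∈ ℝ^d is a Lebesgue point of f, then the supremum defining the uncentered fractional maximal function M_α f(x) = sup_{B ∋ x} r(B)^α f_B is attained: there exists a ball B with x ∈ closure(B) such that r(B)^α f_B = M_α f(x). -/
open MeasureTheory Metric Set Filter
open scoped ENNReal NNReal Topology

noncomputable section

abbrev Euc (d : ℕ) : Type := EuclideanSpace ℝ (Fin d)

def setAvg {d : ℕ} (s : Set (Euc d)) (f : Euc d → ℝ) : ℝ :=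
  (volume s).toReal⁻¹ * ∫ y in s, f y

/-- The uncentered fractional Hardy–Littlewood maximal function. -/
def Mu (d : ℕ) (α : ℝ) (f : Euc d → ℝ) (x : Euc d) : ℝ :=
  sSup {v | ∃ z : Euc d, ∃ r : ℝ, 0 < r ∧ x ∈ ball z r ∧ v = r ^ α * setAvg (ball z r) f}

section Aux

variable {d : ℕ}

private lemma vol_ball_toReal (z : Euc d) {r : ℝ} (hr : 0 < r) :
    (volume (ball z r)).toReal = r ^ d * (volume (ball (0 : Euc d) 1)).toReal := by
  rw [Measure.addHaar_ball_of_pos volume z hr, finrank_euclideanSpace_fin,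
    ENNReal.toReal_mul, ENNReal.toReal_ofReal (by positivity)]

private lemma kappa_pos : 0 < (volume (ball (0 : Euc d) 1)).toReal :=
  ENNReal.toReal_pos (measure_ball_pos volume 0 one_pos).ne' measure_ball_lt_top.ne

private lemma integrableOn_ball' {p : ℝ} (hp : 1 ≤ p) {f : Euc d → ℝ}
    (hfp : MemLp f (ENNReal.ofReal p) volume) (z : Euc d) (r : ℝ) :
    IntegrableOn f (ball z r) volume := by
  haveI : IsFiniteMeasure (volume.restrict (ball z r)) :=
    ⟨by rw [Measure.restrict_apply_univ]; exact measure_ball_lt_top⟩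
  have h1 : (1 : ℝ≥0∞) ≤ ENNReal.ofReal p := by
    rw [← ENNReal.ofReal_one]
    exact ENNReal.ofReal_le_ofReal hp
  exact memLp_one_iff_integrable.mp ((hfp.restrict (ball z r)).mono_exponent h1)

private lemma continuousAt_ball_integral {f : Euc d → ℝ} (_hd : 0 < d)
    (hloc : ∀ (z : Euc d) (r : ℝ), IntegrableOn f (ball z r) volume)
    (z : Euc d) {r : ℝ} (hr : 0 < r) :
    ContinuousAt (fun w : Euc d × ℝ => ∫ y in ball w.1 w.2, f y) (z, r) := by
  have hmeas : ∀ (z' : Euc d) (r' : ℝ),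
      MeasurableSet (ball z' r') := fun _ _ => measurableSet_ball
  have key : Tendsto (fun w : Euc d × ℝ =>
      ∫ y, (ball w.1 w.2).indicator f y) (𝓝 (z, r))
      (𝓝 (∫ y, (ball z r).indicator f y)) := by
    apply tendsto_integral_filter_of_dominated_convergence
      (bound := (ball z (r + 2)).indicator fun y => ‖f y‖)
    · filter_upwards with w using
        ((hloc w.1 w.2).integrable_indicator measurableSet_ball).aestronglyMeasurable
    · have hball : Metric.ball (z, r) 1 ∈ 𝓝 (z, r) := ball_mem_nhds _ one_pos
      filter_upwards [hball] with w hw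
      have hw1 : dist w.1 z < 1 := lt_of_le_of_lt (le_max_left _ _) hw
      have hw2 : dist w.2 r < 1 := lt_of_le_of_lt (le_max_right _ _) hw
      filter_upwards with y
      by_cases hy : y ∈ ball w.1 w.2
      · have hy2 : y ∈ ball z (r + 2) := by
          rw [mem_ball] at hy ⊢
          have h1 : dist y z ≤ dist y w.1 + dist w.1 z := dist_triangle _ _ _
          have h2 : w.2 ≤ r + 1 := by
            have := abs_sub_lt_iff.mp (by rwa [Real.dist_eq] at hw2)
            linarith [this.1]
          linarith
        rw [indicator_of_mem hy, indicator_of_mem hy2]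
      · rw [indicator_of_notMem hy]
        simp only [norm_zero]
        exact indicator_nonneg (fun y _ => norm_nonneg _) y
    · exact (integrable_indicator_iff measurableSet_ball).2 ((hloc z (r + 2)).norm)
    · have hsph : ∀ᵐ y : Euc d, y ∉ sphere z r := by
        rw [ae_iff]
        simpa only [not_not, setOf_mem_eq] using Measure.addHaar_sphere_of_ne_zero volume z hr.ne'
      filter_upwards [hsph] with y hy
      rcases lt_or_gt_of_ne (fun h : dist y z = r => hy h) with hlt | hgt
      · have hev : ∀ᶠ w : Euc d × ℝ in 𝓝 (z, r), y ∈ ball w.1 w.2 := by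
          have hc : ContinuousAt (fun w : Euc d × ℝ => dist y w.1) (z, r) :=
            (continuous_const.dist continuous_fst).continuousAt
        -- eventually dist y w.1 < w.2
          have := hc.eventually_lt continuous_snd.continuousAt hlt
          filter_upwards [this] with w hw using mem_ball.mpr hw
        rw [indicator_of_mem (mem_ball.mpr hlt)]
        exact tendsto_const_nhds.congr' (hev.mono fun w hw => (indicator_of_mem hw f).symm)
      · have hev : ∀ᶠ w : Euc d × ℝ in 𝓝 (z, r), y ∉ ball w.1 w.2 := by
          have hc : ContinuousAt (fun w : Euc d × ℝ => dist y w.1) (z, r) :=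
            (continuous_const.dist continuous_fst).continuousAt
          have := continuous_snd.continuousAt.eventually_lt hc hgt
          filter_upwards [this] with w hw
          simpa [mem_ball, not_lt] using hw.le
        rw [indicator_of_notMem (by simpa [mem_ball, not_lt] using hgt.le)]
        exact tendsto_const_nhds.congr' (hev.mono fun w hw => (indicator_of_notMem hw f).symm)
  have : (fun w : Euc d × ℝ => ∫ y in ball w.1 w.2, f y) =
      fun w => ∫ y, (ball w.1 w.2).indicator f y := by
    funext w; rw [integral_indicator measurableSet_ball]
  rw [ContinuousAt, this, ← integral_indicator measurableSet_ball]
  exact key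

private lemma continuousAt_g {f : Euc d → ℝ} {α : ℝ}
    (hcont : ∀ (z : Euc d) {r : ℝ}, 0 < r →
      ContinuousAt (fun w : Euc d × ℝ => ∫ y in ball w.1 w.2, f y) (z, r))
    (z : Euc d) {r : ℝ} (hr : 0 < r) :
    ContinuousAt (fun w : Euc d × ℝ => w.2 ^ α * setAvg (ball w.1 w.2) f) (z, r) := by
  have h1 : ContinuousAt (fun w : Euc d × ℝ => w.2 ^ α) (z, r) :=
    ContinuousAt.comp (g := fun t : ℝ => t ^ α) (f := Prod.snd) (x := (z, r))
      (Real.continuousAt_rpow_const r α (Or.inl hr.ne')) continuous_snd.continuousAt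
  have hev : ∀ᶠ w : Euc d × ℝ in 𝓝 (z, r), 0 < w.2 :=
    continuous_const.continuousAt.eventually_lt continuous_snd.continuousAt hr
  have h2 : ContinuousAt (fun w : Euc d × ℝ => (volume (ball w.1 w.2)).toReal⁻¹) (z, r) := by
    have hk := kappa_pos (d := d)
    have hc : ContinuousAt (fun w : Euc d × ℝ =>
        (w.2 ^ d * (volume (ball (0 : Euc d) 1)).toReal)⁻¹) (z, r) :=
      (((continuous_snd.pow d).mul continuous_const).continuousAt).inv₀
        (by show r ^ d * (volume (ball (0 : Euc d) 1)).toReal ≠ 0; positivity)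
    apply hc.congr
    filter_upwards [hev] with w hw
    rw [vol_ball_toReal w.1 hw]
  have h3 := hcont z hr
  have := h1.mul (h2.mul h3)
  exact this

private lemma holder_bound {p : ℝ} (hp : 1 ≤ p) {f : Euc d → ℝ}
    (hfp : MemLp f (ENNReal.ofReal p) volume)
    (hloc : ∀ (z : Euc d) (r : ℝ), IntegrableOn f (ball z r) volume)
    (z : Euc d) (r : ℝ) :
    ∫ y in ball z r, f y ≤ (eLpNorm f (ENNReal.ofReal p) volume).toReal *
      (volume (ball z r)).toReal ^ (1 - 1/p) := by
  have hp0 : 0 < p := lt_of_lt_of_le one_pos hp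
  have hq1 : (1 : ℝ≥0∞) ≤ ENNReal.ofReal p := by
    rw [← ENNReal.ofReal_one]; exact ENNReal.ofReal_le_ofReal hp
  set μB := volume.restrict (ball z r) with hμB
  have hint : Integrable f μB := hloc z r
  have step1 : ∫ y in ball z r, f y ≤ ∫ y in ball z r, ‖f y‖ :=
    integral_mono hint hint.norm fun y => by simpa [Real.norm_eq_abs] using le_abs_self (f y)
  have step2 : ∫ y in ball z r, ‖f y‖ = (eLpNorm f 1 μB).toReal := by
    rw [eLpNorm_one_eq_lintegral_enorm, ← ofReal_integral_norm_eq_lintegral_enorm hint,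
      ENNReal.toReal_ofReal (integral_nonneg fun y => norm_nonneg _)]
  have step3 : eLpNorm f 1 μB ≤ eLpNorm f (ENNReal.ofReal p) μB *
      (volume (ball z r)) ^ (1 - 1/p) := by
    have h := eLpNorm_le_eLpNorm_mul_rpow_measure_univ (μ := μB) hq1
      (hfp.1.restrict (s := ball z r))
    rwa [Measure.restrict_apply_univ, ENNReal.toReal_one, ENNReal.toReal_ofReal hp0.le,
      div_one] at h
  have step4 : eLpNorm f (ENNReal.ofReal p) μB ≤ eLpNorm f (ENNReal.ofReal p) volume :=
    eLpNorm_mono_measure f Measure.restrict_le_self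
  have hRfin : eLpNorm f (ENNReal.ofReal p) volume * (volume (ball z r)) ^ (1 - 1/p) ≠ ⊤ := by
    apply ENNReal.mul_ne_top hfp.2.ne
    exact (ENNReal.rpow_lt_top_of_nonneg
      (sub_nonneg.mpr (by rw [div_le_one hp0]; linarith)) measure_ball_lt_top.ne).ne
  calc ∫ y in ball z r, f y ≤ (eLpNorm f 1 μB).toReal := step1.trans_eq step2
    _ ≤ (eLpNorm f (ENNReal.ofReal p) volume * (volume (ball z r)) ^ (1 - 1/p)).toReal := by
        apply ENNReal.toReal_mono hRfin
        exact step3.trans (mul_le_mul_left step4 _)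
    _ = (eLpNorm f (ENNReal.ofReal p) volume).toReal *
        (volume (ball z r)).toReal ^ (1 - 1/p) := by
        rw [ENNReal.toReal_mul, ENNReal.toReal_rpow]

private lemma growth_bound {p α : ℝ} (hp : 1 ≤ p) {f : Euc d → ℝ}
    (hfp : MemLp f (ENNReal.ofReal p) volume)
    (hloc : ∀ (z : Euc d) (r : ℝ), IntegrableOn f (ball z r) volume) :
    ∃ C : ℝ, 0 ≤ C ∧ ∀ (z : Euc d) (r : ℝ), 0 < r →
      r ^ α * setAvg (ball z r) f ≤ C * r ^ (α - (d:ℝ)/p) := by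
  have hp0 : 0 < p := lt_of_lt_of_le one_pos hp
  set N := (eLpNorm f (ENNReal.ofReal p) volume).toReal with hN
  have hN0 : 0 ≤ N := ENNReal.toReal_nonneg
  set κ := (volume (ball (0 : Euc d) 1)).toReal with hκ
  have hκ0 : 0 < κ := kappa_pos
  refine ⟨N * κ ^ (-(1/p)), by positivity, fun z r hr => ?_⟩
  have hV : (volume (ball z r)).toReal = r ^ d * κ := vol_ball_toReal z hr
  have hV0 : 0 < r ^ d * κ := by positivity
  have hI := holder_bound hp hfp hloc z r
  rw [hV] at hI
  have hrα : (0:ℝ) ≤ r ^ α := Real.rpow_nonneg hr.le α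
  have havg : setAvg (ball z r) f ≤ (r ^ d * κ)⁻¹ * (N * (r ^ d * κ) ^ (1 - 1/p)) := by
    rw [setAvg, hV]
    exact mul_le_mul_of_nonneg_left hI (by positivity)
  have e1 : (r ^ d * κ)⁻¹ * (r ^ d * κ) ^ (1 - 1/p) = (r ^ d * κ) ^ (-(1/p)) := by
    rw [← Real.rpow_neg_one (r ^ d * κ), ← Real.rpow_add hV0]
    congr 1
    ring
  have e2 : (r ^ d * κ) ^ (-(1/p)) = r ^ (-((d:ℝ)/p)) * κ ^ (-(1/p)) := by
    rw [Real.mul_rpow (by positivity) hκ0.le, ← Real.rpow_natCast r d,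
      ← Real.rpow_mul hr.le]
    congr 1
    ring
  have key : (r ^ d * κ)⁻¹ * (r ^ d * κ) ^ (1 - 1/p) = r ^ (-((d:ℝ)/p)) * κ ^ (-(1/p)) :=
    e1.trans e2
  have e3 : r ^ α * r ^ (-((d:ℝ)/p)) = r ^ (α - (d:ℝ)/p) := by
    rw [← Real.rpow_add hr]
    ring_nf
  calc r ^ α * setAvg (ball z r) f
      ≤ r ^ α * ((r ^ d * κ)⁻¹ * (N * (r ^ d * κ) ^ (1 - 1/p))) :=
        mul_le_mul_of_nonneg_left havg hrα
    _ = r ^ α * ((r ^ (-((d:ℝ)/p)) * κ ^ (-(1/p))) * N) := by rw [← key]; ring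
    _ = r ^ α * r ^ (-((d:ℝ)/p)) * (κ ^ (-(1/p)) * N) := by ring
    _ = N * κ ^ (-(1/p)) * r ^ (α - (d:ℝ)/p) := by rw [e3]; ring

private lemma small_bound {f : Euc d → ℝ} (hf : 0 ≤ f)
    (hloc : ∀ (z : Euc d) (r : ℝ), IntegrableOn f (ball z r) volume)
    (x : Euc d)
    (hleb : Tendsto (fun r => setAvg (ball x r) (fun y => |f y - f x|))
      (nhdsWithin 0 (Ioi 0)) (nhds 0)) :
    ∃ s₀ : ℝ, 0 < s₀ ∧ ∀ (z : Euc d) (r : ℝ), 0 < r → r ≤ s₀ → x ∈ ball z r →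
      setAvg (ball z r) f ≤ 2 ^ d * (f x + 1) := by
  have hev : ∀ᶠ s in 𝓝[>] (0:ℝ), setAvg (ball x s) (fun y => |f y - f x|) < 1 :=
    hleb.eventually (Iio_mem_nhds one_pos)
  rw [(nhdsGT_basis (0:ℝ)).eventually_iff] at hev
  obtain ⟨s₁, hs₁pos, hs₁⟩ := hev
  refine ⟨s₁ / 3, by positivity, fun z r hr hrs hx => ?_⟩
  have hκ0 : 0 < (volume (ball (0 : Euc d) 1)).toReal := kappa_pos
  set κ := (volume (ball (0 : Euc d) 1)).toReal
  have h2r : 0 < 2 * r := by linarith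
  have h2rs : 2 * r < s₁ := by linarith
  have havg : setAvg (ball x (2*r)) (fun y => |f y - f x|) < 1 :=
    hs₁ (mem_Ioo.mpr ⟨h2r, h2rs⟩)
  have hsub : ball z r ⊆ ball x (2*r) := by
    intro y hy
    rw [mem_ball] at hy hx ⊢
    calc dist y x ≤ dist y z + dist x z := by
          rw [dist_comm x z]; exact dist_triangle y z x
      _ < 2 * r := by linarith
  have hVz : (volume (ball z r)).toReal = r ^ d * κ := vol_ball_toReal z hr
  have hVx : (volume (ball x (2*r))).toReal = 2 ^ d * (r ^ d * κ) := by
    rw [vol_ball_toReal x h2r, mul_pow]; ring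
  have hVz0 : 0 < r ^ d * κ := by positivity
  have hint1 : IntegrableOn (fun y => |f y - f x|) (ball x (2*r)) volume :=
    ((hloc x (2*r)).sub (integrableOn_const measure_ball_lt_top.ne)).abs
  have hintc : IntegrableOn (fun _ : Euc d => f x) (ball x (2*r)) volume :=
    integrableOn_const measure_ball_lt_top.ne
  have hstep : ∫ y in ball x (2*r), f y ≤
      ∫ y in ball x (2*r), (|f y - f x| + f x) := by
    apply integral_mono (hloc x (2*r)) (hint1.add hintc)
    intro y
    have h := le_abs_self (f y - f x)
    show f y ≤ |f y - f x| + f x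
    linarith
  have hiabs : ∫ y in ball x (2*r), |f y - f x| ≤ 2 ^ d * (r ^ d * κ) := by
    have hV' : (0:ℝ) < 2 ^ d * (r ^ d * κ) := by positivity
    have : setAvg (ball x (2*r)) (fun y => |f y - f x|) =
        (2 ^ d * (r ^ d * κ))⁻¹ * ∫ y in ball x (2*r), |f y - f x| := by
      rw [setAvg, hVx]
    rw [this] at havg
    calc ∫ y in ball x (2*r), |f y - f x|
        = (2 ^ d * (r ^ d * κ)) * ((2 ^ d * (r ^ d * κ))⁻¹ *
            ∫ y in ball x (2*r), |f y - f x|) := by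
          field_simp
      _ ≤ (2 ^ d * (r ^ d * κ)) * 1 := mul_le_mul_of_nonneg_left havg.le hV'.le
      _ = 2 ^ d * (r ^ d * κ) := mul_one _
  have hic : ∫ y in ball x (2*r), (|f y - f x| + f x) ≤
      2 ^ d * (r ^ d * κ) * (1 + f x) := by
    rw [integral_add hint1 hintc, setIntegral_const, smul_eq_mul, Measure.real, hVx]
    have hfx : 0 ≤ f x := hf x
    nlinarith [hiabs]
  have hmono : ∫ y in ball z r, f y ≤ ∫ y in ball x (2*r), f y := by
    apply setIntegral_mono_set (hloc x (2*r))
      (Filter.Eventually.of_forall fun y => hf y) (HasSubset.Subset.eventuallyLE hsub)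
  have hfinal : ∫ y in ball z r, f y ≤ 2 ^ d * (r ^ d * κ) * (1 + f x) :=
    hmono.trans (hstep.trans hic)
  rw [setAvg, hVz]
  calc (r ^ d * κ)⁻¹ * ∫ y in ball z r, f y
      ≤ (r ^ d * κ)⁻¹ * (2 ^ d * (r ^ d * κ) * (1 + f x)) :=
        mul_le_mul_of_nonneg_left hfinal (by positivity)
    _ = 2 ^ d * (f x + 1) := by field_simp; ring

end Aux

theorem stmt1 (d : ℕ) (α p : ℝ) (hα : 0 < α) (hαd : α < d)
    (hp : 1 ≤ p) (hpd : p < d / α)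
    (f : Euc d → ℝ) (hf : 0 ≤ f) (hfp : MemLp f (ENNReal.ofReal p) volume)
    (x : Euc d)
    (hleb : Tendsto (fun r => setAvg (ball x r) (fun y => |f y - f x|))
      (nhdsWithin 0 (Ioi 0)) (nhds 0)) :
    ∃ z : Euc d, ∃ r : ℝ, 0 < r ∧ x ∈ closure (ball z r) ∧
      r ^ α * setAvg (ball z r) f = Mu d α f x := by
  have hd : 0 < d := by
    rcases Nat.eq_zero_or_pos d with h | h
    · subst h; norm_num at hαd; linarith
    · exact h
  have hp0 : 0 < p := lt_of_lt_of_le one_pos hp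
  have hloc : ∀ (z : Euc d) (r : ℝ), IntegrableOn f (ball z r) volume :=
    fun z r => integrableOn_ball' hp hfp z r
  set g : Euc d × ℝ → ℝ := fun w => w.2 ^ α * setAvg (ball w.1 w.2) f with hg
  set S := {v | ∃ z : Euc d, ∃ r : ℝ, 0 < r ∧ x ∈ ball z r ∧
    v = r ^ α * setAvg (ball z r) f} with hSdef
  have hMuS : Mu d α f x = sSup S := rfl
  obtain ⟨C, hC0, hgrow⟩ := growth_bound (α := α) hp hfp hloc
  obtain ⟨s₀, hs₀, hsmall⟩ := small_bound hf hloc x hleb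
  set A : ℝ := 2 ^ d * (f x + 1) with hA
  have hfx0 : 0 ≤ f x := hf x
  have hA0 : 0 < A := by positivity
  set β : ℝ := α - (d:ℝ)/p with hβ
  have hβneg : β < 0 := by
    have h1 : p * α < d := (lt_div_iff₀ hα).mp hpd
    have h2 : α < (d:ℝ) / p := (lt_div_iff₀ hp0).mpr (by linarith [mul_comm p α])
    simp only [hβ, sub_neg]
    exact h2
  set C₁ : ℝ := max C 1 with hC₁def
  have hC₁ : 0 < C₁ := lt_of_lt_of_le one_pos (le_max_right _ _)
  -- pointwise bounds
  have hsmallv : ∀ (z : Euc d) (r : ℝ), 0 < r → r ≤ s₀ → x ∈ ball z r →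
      g (z, r) ≤ A * r ^ α := by
    intro z r hr hrs hx
    have h1 := hsmall z r hr hrs hx
    have h2 : (0:ℝ) ≤ r ^ α := Real.rpow_nonneg hr.le α
    calc g (z, r) = r ^ α * setAvg (ball z r) f := rfl
      _ ≤ r ^ α * A := mul_le_mul_of_nonneg_left h1 h2
      _ = A * r ^ α := mul_comm _ _
  have hlargev : ∀ (z : Euc d) (r : ℝ), 0 < r → g (z, r) ≤ C₁ * r ^ β := by
    intro z r hr
    have h1 := hgrow z r hr
    have h2 : (0:ℝ) < r ^ β := Real.rpow_pos_of_pos hr β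
    calc g (z, r) ≤ C * r ^ β := h1
      _ ≤ C₁ * r ^ β := mul_le_mul_of_nonneg_right (le_max_left _ _) h2.le
  have hbdd : BddAbove S := by
    refine ⟨max (A * s₀ ^ α) (C₁ * s₀ ^ β), fun v hv => ?_⟩
    obtain ⟨z, r, hr, hx, rfl⟩ := hv
    by_cases hrs : r ≤ s₀
    · refine le_max_of_le_left ?_
      calc r ^ α * setAvg (ball z r) f ≤ A * r ^ α := hsmallv z r hr hrs hx
        _ ≤ A * s₀ ^ α := mul_le_mul_of_nonneg_left
            (Real.rpow_le_rpow hr.le hrs hα.le) hA0.le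
    · refine le_max_of_le_right ?_
      push_neg at hrs
      calc r ^ α * setAvg (ball z r) f ≤ C₁ * r ^ β := hlargev z r hr
        _ ≤ C₁ * s₀ ^ β := mul_le_mul_of_nonneg_left
            (Real.rpow_le_rpow_of_nonpos hs₀ hrs.le hβneg.le) hC₁.le
  have hnonneg : ∀ v ∈ S, 0 ≤ v := by
    rintro v ⟨z, r, hr, hx, rfl⟩
    have h1 : (0:ℝ) ≤ ∫ y in ball z r, f y :=
      setIntegral_nonneg measurableSet_ball fun y _ => hf y
    have h2 : (0:ℝ) ≤ setAvg (ball z r) f :=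
      mul_nonneg (inv_nonneg.mpr ENNReal.toReal_nonneg) h1
    exact mul_nonneg (Real.rpow_nonneg hr.le α) h2
  have hne : S.Nonempty :=
    ⟨(1:ℝ) ^ α * setAvg (ball x 1) f, x, 1, one_pos, mem_ball_self one_pos, rfl⟩
  by_cases hMu : 0 < sSup S
  swap
  · -- degenerate case: sSup S ≤ 0 and all elements ≥ 0
    push_neg at hMu
    have hv₁ : (1:ℝ) ^ α * setAvg (ball x 1) f ∈ S :=
      ⟨x, 1, one_pos, mem_ball_self one_pos, rfl⟩
    have h1 : (1:ℝ) ^ α * setAvg (ball x 1) f ≤ sSup S := le_csSup hbdd hv₁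
    have h2 : 0 ≤ (1:ℝ) ^ α * setAvg (ball x 1) f := hnonneg _ hv₁
    refine ⟨x, 1, one_pos, subset_closure (mem_ball_self one_pos), ?_⟩
    rw [hMuS]
    linarith
  · set η : ℝ := sSup S / 2 with hη
    have hη0 : 0 < η := by positivity
    have hηlt : η < sSup S := by rw [hη]; linarith
    set ε : ℝ := min s₀ ((η / A) ^ α⁻¹) with hε
    have hε0 : 0 < ε := lt_min hs₀ (Real.rpow_pos_of_pos (by positivity) _)
    have hεs₀ : ε ≤ s₀ := min_le_left _ _
    have hsmallη : ∀ (z : Euc d) (r : ℝ), 0 < r → r ≤ ε → x ∈ ball z r →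
        g (z, r) ≤ η := by
      intro z r hr hrε hx
      have h1 : g (z, r) ≤ A * r ^ α := hsmallv z r hr (hrε.trans hεs₀) hx
      have h2 : r ^ α ≤ ((η / A) ^ α⁻¹) ^ α :=
        Real.rpow_le_rpow hr.le (hrε.trans (min_le_right _ _)) hα.le
      have h3 : ((η / A) ^ α⁻¹) ^ α = η / A := by
        rw [← Real.rpow_mul (by positivity : (0:ℝ) ≤ η / A), inv_mul_cancel₀ hα.ne',
          Real.rpow_one]
      calc g (z, r) ≤ A * r ^ α := h1
        _ ≤ A * ((η / A) ^ α⁻¹) ^ α := mul_le_mul_of_nonneg_left h2 hA0.le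
        _ = η := by rw [h3]; field_simp
    set R₀ : ℝ := (η / C₁) ^ β⁻¹ with hR₀
    have hR₀0 : 0 < R₀ := Real.rpow_pos_of_pos (by positivity) _
    set R : ℝ := max ε R₀ with hR
    have hεR : ε ≤ R := le_max_left _ _
    have hlargeη : ∀ (z : Euc d) (r : ℝ), 0 < r → R ≤ r → g (z, r) ≤ η := by
      intro z r hr hrR
      have h1 : g (z, r) ≤ C₁ * r ^ β := hlargev z r hr
      have h2 : r ^ β ≤ R₀ ^ β :=
        Real.rpow_le_rpow_of_nonpos hR₀0 ((le_max_right _ _).trans hrR) hβneg.le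
      have h3 : R₀ ^ β = η / C₁ := by
        rw [hR₀, ← Real.rpow_mul (by positivity : (0:ℝ) ≤ η / C₁), inv_mul_cancel₀ hβneg.ne,
          Real.rpow_one]
      calc g (z, r) ≤ C₁ * r ^ β := h1
        _ ≤ C₁ * R₀ ^ β := mul_le_mul_of_nonneg_left h2 hC₁.le
        _ = η := by rw [h3]; field_simp
    -- the compact set
    set K : Set (Euc d × ℝ) := {w | dist x w.1 ≤ w.2 ∧ w.2 ∈ Icc ε R} with hK
    have hKclosed : IsClosed K := by
      apply IsClosed.inter
      · exact isClosed_le (continuous_const.dist continuous_fst) continuous_snd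
      · exact isClosed_Icc.preimage continuous_snd
    have hKcompact : IsCompact K := by
      apply IsCompact.of_isClosed_subset ((isCompact_closedBall x R).prod isCompact_Icc)
        hKclosed
      rintro ⟨z, r⟩ ⟨h1, h2⟩
      refine ⟨?_, h2⟩
      rw [mem_closedBall, dist_comm]
      exact h1.trans h2.2
    have hKne : (x, ε) ∈ K := ⟨by simpa using hε0.le, ⟨le_refl ε, hεR⟩⟩
    have hcont : ∀ (z : Euc d) {r : ℝ}, 0 < r →
        ContinuousAt (fun w : Euc d × ℝ => ∫ y in ball w.1 w.2, f y) (z, r) :=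
      fun z r hr => continuousAt_ball_integral hd hloc z hr
    have hgcont : ContinuousOn g K := by
      intro w hw
      have h0 : 0 < w.2 := lt_of_lt_of_le hε0 hw.2.1
      have := continuousAt_g (f := f) (α := α) hcont w.1 h0
      rw [Prod.mk.eta] at this
      exact this.continuousWithinAt
    obtain ⟨w₀, hw₀K, hw₀max⟩ := hKcompact.exists_isMaxOn ⟨(x, ε), hKne⟩ hgcont
    have hw₀r : 0 < w₀.2 := lt_of_lt_of_le hε0 hw₀K.2.1
    -- upper bound : g w₀ ≤ sSup S
    have hup : g w₀ ≤ sSup S := by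
      have hcw : ContinuousAt (fun t : ℝ => g (w₀.1, t)) w₀.2 := by
        have h1 := continuousAt_g (f := f) (α := α) hcont w₀.1 hw₀r
        exact h1.comp ((continuous_const.prodMk continuous_id).continuousAt)
      have htend : Tendsto (fun t : ℝ => g (w₀.1, t)) (𝓝[>] w₀.2) (𝓝 (g (w₀.1, w₀.2))) :=
        hcw.tendsto.mono_left nhdsWithin_le_nhds
      have hev : ∀ᶠ t in 𝓝[>] w₀.2, g (w₀.1, t) ≤ sSup S := by
        filter_upwards [self_mem_nhdsWithin] with t ht
        refine le_csSup hbdd ⟨w₀.1, t, lt_trans hw₀r ht, ?_, rfl⟩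
        rw [mem_ball]
        exact lt_of_le_of_lt hw₀K.1 ht
      have := le_of_tendsto htend hev
      rwa [Prod.mk.eta] at this
    -- lower bound : sSup S ≤ g w₀
    have hlow : sSup S ≤ max η (g w₀) := by
      apply csSup_le hne
      rintro v ⟨z, r, hr, hx, rfl⟩
      by_cases h1 : r ≤ ε
      · exact le_max_of_le_left (hsmallη z r hr h1 hx)
      · by_cases h2 : R ≤ r
        · exact le_max_of_le_left (hlargeη z r hr h2)
        · push_neg at h1 h2
          have hmem : ((z, r) : Euc d × ℝ) ∈ K := ⟨(mem_ball.mp hx).le, ⟨h1.le, h2.le⟩⟩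
          have hle : g (z, r) ≤ g w₀ := hw₀max hmem
          exact le_max_of_le_right hle
    have hfin : sSup S ≤ g w₀ := by
      rcases le_max_iff.mp hlow with h | h
      · linarith
      · exact h
    refine ⟨w₀.1, w₀.2, hw₀r, ?_, ?_⟩
    · rw [closure_ball w₀.1 hw₀r.ne']
      exact mem_closedBall.mpr hw₀K.1
    · rw [hMuS]
      exact le_antisymm hup hfin
end
end

section
/- Let 0 < α < d and let f ∈ L^∞(ℝ^d) be nonnegative with bounded variation. Then the uncentered fractional maximal function M_α f is locally Lipschitz. More precisely, on any ball B on which M_α f is positive, there is r_0 > 0 such that only balls of radius at least r_0 are relevant in the supremum, and M_α f is Lipschitz on B with constant σ_d^{-1} r_0^{α-d} Var(f). -/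
open MeasureTheory Metric Set Filter
open scoped ENNReal NNReal

noncomputable section

/-- The set of integrals `∫ f div φ` over admissible test vector fields `φ`. -/
def divSet {d : ℕ} (f : Euc d → ℝ) : Set ℝ :=
  {v | ∃ φ : Euc d → Euc d, ContDiff ℝ 1 φ ∧ HasCompactSupport φ ∧ (∀ x, ‖φ x‖ ≤ 1) ∧
    v = ∫ x, f x * ∑ i, fderiv ℝ φ x (EuclideanSpace.single i (1 : ℝ)) i}

/-- The total variation of `f`. -/
def variation {d : ℕ} (f : Euc d → ℝ) : ℝ := sSup (divSet f)

section lemmas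
variable {d : ℕ} {f : Euc d → ℝ}

lemma zero_mem_divSet : (0:ℝ) ∈ divSet f := by
  refine ⟨fun _ => 0, contDiff_const, ?_, fun x => by simp, ?_⟩
  · simpa [HasCompactSupport, tsupport, Function.support] using isCompact_empty
  · simp [fderiv_const]

lemma variation_nonneg (hBV : BddAbove (divSet f)) : 0 ≤ variation f :=
  le_csSup hBV zero_mem_divSet

lemma integrableOn_of_memtop (hfb : MemLp f ⊤ volume) {s : Set (Euc d)}
    (hs : volume s ≠ ⊤) : IntegrableOn f s := by
  haveI : Fact (volume s < ⊤) := ⟨lt_top_iff_ne_top.mpr hs⟩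
  exact (hfb.restrict s).integrable le_top

lemma ae_bound_of_memtop (hfb : MemLp f ⊤ volume) :
    ∀ᵐ y, ‖f y‖ ≤ (eLpNorm f ⊤ volume).toReal := by
  have h := ae_le_eLpNormEssSup (f := f) (μ := volume)
  filter_upwards [h] with y hy
  have : (‖f y‖₊ : ℝ≥0∞) ≤ eLpNorm f ⊤ volume := by
    rwa [eLpNorm_exponent_top]
  have h2 := ENNReal.toReal_mono (hfb.eLpNorm_ne_top) this
  simpa using h2

end lemmas

section L1
variable {d : ℕ} {f : Euc d → ℝ}

lemma div_smul_const {g : Euc d → ℝ} (hg : DifferentiableAt ℝ g x) (w : Euc d) :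
    ∑ i, fderiv ℝ (fun y => g y • w) x (EuclideanSpace.single i (1:ℝ)) i
      = fderiv ℝ g x w := by
  rw [fderiv_smul_const hg w]
  have hw : ∑ i, w i • (EuclideanSpace.single i (1:ℝ)) = w := by
    have := (EuclideanSpace.basisFun (Fin d) ℝ).sum_repr w
    simpa [EuclideanSpace.basisFun_repr, EuclideanSpace.basisFun_apply] using this
  calc ∑ i, ((fderiv ℝ g x).smulRight w) (EuclideanSpace.single i (1:ℝ)) i
      = ∑ i, w i • (fderiv ℝ g x (EuclideanSpace.single i (1:ℝ))) := by
        refine Finset.sum_congr rfl fun i _ => ?_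
        simp [ContinuousLinearMap.smulRight_apply, PiLp.smul_apply, mul_comm]
    _ = fderiv ℝ g x (∑ i, w i • (EuclideanSpace.single i (1:ℝ))) := by
        rw [map_sum]
        exact Finset.sum_congr rfl fun i _ => ((fderiv ℝ g x).map_smul _ _).symm
    _ = fderiv ℝ g x w := by rw [hw]

lemma directional_le_variation (hBV : BddAbove (divSet f))
    {g : Euc d → ℝ} (hg : ContDiff ℝ 1 g) (hgs : HasCompactSupport g)
    (hg1 : ∀ y, |g y| ≤ 1) {w : Euc d} (hw : ‖w‖ ≤ 1) :
    (∫ y, f y * (fderiv ℝ g y w)) ≤ variation f := by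
  refine le_csSup hBV ?_
  refine ⟨fun y => g y • w, hg.smul contDiff_const, ?_, ?_, ?_⟩
  · exact hgs.smul_right
  · intro x
    rw [norm_smul]
    calc ‖g x‖ * ‖w‖ ≤ 1 * 1 := by
          apply mul_le_mul _ hw (norm_nonneg _) zero_le_one
          simpa [Real.norm_eq_abs] using hg1 x
      _ = 1 := one_mul 1
  · refine integral_congr_ae (Eventually.of_forall fun y => ?_)
    simp only [div_smul_const (hg.differentiable one_ne_zero y) w]

end L1

section L2
variable {d : ℕ} {f : Euc d → ℝ}

lemma fderiv_translate {g : Euc d → ℝ} (hg : Differentiable ℝ g) (c y : Euc d) :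
    fderiv ℝ (fun y => g (y - c)) y = fderiv ℝ g (y - c) := by
  have h2 : HasFDerivAt (fun y : Euc d => y - c)
      (ContinuousLinearMap.id ℝ (Euc d)) y := (hasFDerivAt_id y).sub_const c
  have : HasFDerivAt (fun y => g (y - c)) (fderiv ℝ g (y - c)) y := by
    exact (hg (y - c)).hasFDerivAt.comp y h2
  exact this.fderiv

lemma hasCompactSupport_translate {g : Euc d → ℝ} (hgs : HasCompactSupport g) (c : Euc d) :
    HasCompactSupport (fun y => g (y - c)) :=
  hgs.comp_homeomorph (Homeomorph.subRight c)

lemma shift_le_variation (hfb : MemLp f ⊤ volume) (hBV : BddAbove (divSet f))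
    {g : Euc d → ℝ} (hg : ContDiff ℝ 1 g) (hgs : HasCompactSupport g)
    (hg1 : ∀ y, |g y| ≤ 1) (h : Euc d) :
    (∫ y, f y * g (y - h)) - (∫ y, f y * g y) ≤ ‖h‖ * variation f := by
  rcases eq_or_ne h 0 with rfl | hne
  · simp
  set u : Euc d := ‖h‖⁻¹ • h with hu_def
  have hu : ‖u‖ = 1 := by
    rw [hu_def, norm_smul, norm_inv, norm_norm, inv_mul_cancel₀ (norm_ne_zero_iff.mpr hne)]
  have fmeas := hfb.aestronglyMeasurable
  -- support radius for g
  obtain ⟨Rg', hRg'⟩ := hgs.isBounded.subset_closedBall 0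
  set Rg : ℝ := max Rg' 0 with hRg_def
  have hRg : tsupport g ⊆ closedBall 0 Rg :=
    hRg'.trans (closedBall_subset_closedBall (le_max_left _ _))
  -- bound on fderiv g
  obtain ⟨Cg', hCg'⟩ :=
    (hg.continuous_fderiv one_ne_zero).bounded_above_of_compact_support
      (HasCompactSupport.fderiv (𝕜 := ℝ) hgs)
  set Cg : ℝ := max Cg' 0 with hCg_def
  have hCg : ∀ y, ‖fderiv ℝ g y‖ ≤ Cg := fun y => (hCg' y).trans (le_max_left _ _)
  have hCg0 : 0 ≤ Cg := le_max_right _ _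
  set G : ℝ → ℝ := fun t => ∫ y, f y * g (y - t • u) with hG_def
  set G' : ℝ → ℝ := fun t => ∫ y, f y * (fderiv ℝ g (y - t • u)) (-u) with hG'_def
  have gcont : Continuous g := hg.continuous
  have dgcont : Continuous (fderiv ℝ g) := hg.continuous_fderiv one_ne_zero
  -- measurability of the integrands
  have measF : ∀ t : ℝ, AEStronglyMeasurable (fun y => f y * g (y - t • u)) volume := by
    intro t
    exact fmeas.mul (gcont.comp (continuous_id.sub continuous_const)).aestronglyMeasurable
  have measF' : ∀ t : ℝ, AEStronglyMeasurable
      (fun y => f y * (fderiv ℝ g (y - t • u)) (-u)) volume := by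
    intro t
    refine fmeas.mul ?_
    exact ((dgcont.comp (continuous_id.sub continuous_const)).clm_apply
      continuous_const).aestronglyMeasurable
  -- vanishing outside big balls
  have hvanish : ∀ t₀ : ℝ, ∀ y : Euc d, y ∉ closedBall (0 : Euc d) (Rg + |t₀| + 1) →
      ∀ t ∈ ball t₀ 1, g (y - t • u) = 0 ∧ fderiv ℝ g (y - t • u) = 0 := by
    intro t₀ y hy t ht
    have hyt : y - t • u ∉ tsupport g := by
      intro hmem
      have h1 : ‖y - t • u‖ ≤ Rg := by simpa using hRg hmem
      have h2 : ‖t • u‖ ≤ |t₀| + 1 := by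
        rw [norm_smul, hu, mul_one, Real.norm_eq_abs]
        have : |t - t₀| < 1 := by simpa [Real.dist_eq] using ht
        calc |t| = |t₀ + (t - t₀)| := by ring_nf
          _ ≤ |t₀| + |t - t₀| := abs_add_le _ _
          _ ≤ |t₀| + 1 := by linarith
      have : ‖y‖ ≤ Rg + |t₀| + 1 := by
        calc ‖y‖ = ‖(y - t • u) + t • u‖ := by rw [sub_add_cancel]
          _ ≤ ‖y - t • u‖ + ‖t • u‖ := norm_add_le _ _
          _ ≤ Rg + (|t₀| + 1) := add_le_add h1 h2
          _ = Rg + |t₀| + 1 := by ring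
      exact hy (by simpa using this)
    constructor
    · exact image_eq_zero_of_notMem_tsupport hyt
    · exact image_eq_zero_of_notMem_tsupport fun hc => hyt (tsupport_fderiv_subset ℝ hc)
  -- integrability of the integrands
  have intF : ∀ t : ℝ, Integrable (fun y => f y * g (y - t • u)) volume := by
    intro t
    set K := closedBall (0 : Euc d) (Rg + |t| + 1)
    have hKvol : volume K ≠ ⊤ := measure_closedBall_lt_top.ne
    refine Integrable.mono' (g := K.indicator fun y => |f y|)
      ?_ (measF t) (Eventually.of_forall fun y => ?_)
    · rw [integrable_indicator_iff measurableSet_closedBall]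
      exact ((integrableOn_of_memtop hfb hKvol).norm)
    · by_cases hy : y ∈ K
      · rw [indicator_of_mem hy]
        rw [norm_mul]
        calc ‖f y‖ * ‖g (y - t • u)‖ ≤ ‖f y‖ * 1 := by
              apply mul_le_mul_of_nonneg_left _ (norm_nonneg _)
              simpa [Real.norm_eq_abs] using hg1 (y - t • u)
          _ = |f y| := by rw [mul_one, Real.norm_eq_abs]
      · rw [indicator_of_notMem hy]
        have := (hvanish t y hy t (mem_ball_self one_pos)).1
        simp [this]
  have intF' : ∀ t : ℝ, Integrable (fun y => f y * (fderiv ℝ g (y - t • u)) (-u)) volume := by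
    intro t
    set K := closedBall (0 : Euc d) (Rg + |t| + 1)
    have hKvol : volume K ≠ ⊤ := measure_closedBall_lt_top.ne
    refine Integrable.mono' (g := K.indicator fun y => Cg * |f y|)
      ?_ (measF' t) (Eventually.of_forall fun y => ?_)
    · rw [integrable_indicator_iff measurableSet_closedBall]
      exact ((integrableOn_of_memtop hfb hKvol).norm.const_mul Cg)
    · by_cases hy : y ∈ K
      · rw [indicator_of_mem hy, norm_mul]
        calc ‖f y‖ * ‖(fderiv ℝ g (y - t • u)) (-u)‖
            ≤ ‖f y‖ * (‖fderiv ℝ g (y - t • u)‖ * ‖-u‖) :=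
              mul_le_mul_of_nonneg_left (ContinuousLinearMap.le_opNorm _ _) (norm_nonneg _)
          _ = ‖f y‖ * ‖fderiv ℝ g (y - t • u)‖ := by rw [norm_neg, hu, mul_one]
          _ ≤ ‖f y‖ * Cg := mul_le_mul_of_nonneg_left (hCg _) (norm_nonneg _)
          _ = Cg * |f y| := by rw [Real.norm_eq_abs]; ring
      · rw [indicator_of_notMem hy]
        have := (hvanish t y hy t (mem_ball_self one_pos)).2
        simp [this]
  -- differentiation under the integral sign
  have hG : ∀ t₀ : ℝ, HasDerivAt G (G' t₀) t₀ := by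
    intro t₀
    set K := closedBall (0 : Euc d) (Rg + |t₀| + 1)
    have hKvol : volume K ≠ ⊤ := measure_closedBall_lt_top.ne
    have key := hasDerivAt_integral_of_dominated_loc_of_deriv_le
      (F := fun t y => f y * g (y - t • u))
      (F' := fun t y => f y * (fderiv ℝ g (y - t • u)) (-u))
      (x₀ := t₀) (bound := K.indicator fun y => Cg * |f y|) (μ := volume)
      (ball_mem_nhds t₀ one_pos) (Eventually.of_forall measF) (intF t₀) (measF' t₀)
      (Eventually.of_forall ?_) ?_ (Eventually.of_forall ?_)
    · exact key.2
    · -- bound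
      intro y t ht
      by_cases hy : y ∈ K
      · rw [indicator_of_mem hy, norm_mul]
        calc ‖f y‖ * ‖(fderiv ℝ g (y - t • u)) (-u)‖
            ≤ ‖f y‖ * (‖fderiv ℝ g (y - t • u)‖ * ‖-u‖) :=
              mul_le_mul_of_nonneg_left (ContinuousLinearMap.le_opNorm _ _) (norm_nonneg _)
          _ = ‖f y‖ * ‖fderiv ℝ g (y - t • u)‖ := by rw [norm_neg, hu, mul_one]
          _ ≤ ‖f y‖ * Cg := mul_le_mul_of_nonneg_left (hCg _) (norm_nonneg _)
          _ = Cg * |f y| := by rw [Real.norm_eq_abs]; ring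
      · rw [indicator_of_notMem hy]
        have := (hvanish t₀ y hy t ht).2
        simp [this]
    · -- bound integrable
      rw [integrable_indicator_iff measurableSet_closedBall]
      exact ((integrableOn_of_memtop hfb hKvol).norm.const_mul Cg)
    · -- differentiability in t
      intro y t _
      have h1 : HasDerivAt (fun t : ℝ => y - t • u) (-u) t := by
        have := ((hasDerivAt_id t).smul_const u).const_sub y
        simpa using this
      have h2 : HasFDerivAt g (fderiv ℝ g (y - t • u)) (y - t • u) :=
        (hg.differentiable one_ne_zero _).hasFDerivAt
      exact (h2.comp_hasDerivAt t h1).const_mul (f y)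
  -- bound on the derivative
  have hbound : ∀ t : ℝ, ‖G' t‖ ≤ variation f := by
    intro t
    have admissible : ∀ w : Euc d, ‖w‖ ≤ 1 →
        (∫ y, f y * (fderiv ℝ g (y - t • u)) w) ≤ variation f := by
      intro w hw
      have hgt : ContDiff ℝ 1 (fun y => g (y - t • u)) :=
        hg.comp (contDiff_id.sub contDiff_const)
      have := directional_le_variation hBV hgt (hasCompactSupport_translate hgs (t • u))
        (fun y => hg1 _) hw
      have heq : (fun y => f y * (fderiv ℝ (fun y => g (y - t • u)) y) w)
          = fun y => f y * (fderiv ℝ g (y - t • u)) w := by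
        funext y
        rw [fderiv_translate (hg.differentiable one_ne_zero) (t • u) y]
      rwa [heq] at this
    rw [Real.norm_eq_abs, abs_le]
    constructor
    · have h1 := admissible u hu.le
      have : -G' t = ∫ y, f y * (fderiv ℝ g (y - t • u)) u := by
        rw [hG'_def, ← integral_neg]
        refine integral_congr_ae (Eventually.of_forall fun y => ?_)
        show -(f y * (fderiv ℝ g (y - t • u)) (-u)) = f y * (fderiv ℝ g (y - t • u)) u
        rw [ContinuousLinearMap.map_neg]
        ring
      linarith [this ▸ h1]
    · exact admissible (-u) (by rw [norm_neg, hu])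
  -- mean value inequality
  have hmv : ‖G ‖h‖ - G 0‖ ≤ variation f * ‖(‖h‖ : ℝ) - 0‖ := by
    refine Convex.norm_image_sub_le_of_norm_hasDerivWithin_le
      (f := G) (f' := G') (s := univ) (fun t _ => (hG t).hasDerivWithinAt)
      (fun t _ => hbound t) convex_univ (mem_univ _) (mem_univ _)
  have hGh : G ‖h‖ = ∫ y, f y * g (y - h) := by
    rw [hG_def]
    simp only [hu_def, smul_smul]
    rw [mul_inv_cancel₀ (norm_ne_zero_iff.mpr hne), one_smul]
  have hG0 : G 0 = ∫ y, f y * g y := by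
    rw [hG_def]; simp
  calc (∫ y, f y * g (y - h)) - (∫ y, f y * g y) = G ‖h‖ - G 0 := by rw [hGh, hG0]
    _ ≤ ‖G ‖h‖ - G 0‖ := le_abs_self _
    _ ≤ variation f * ‖(‖h‖ : ℝ) - 0‖ := hmv
    _ = ‖h‖ * variation f := by
        rw [sub_zero, Real.norm_eq_abs, abs_of_nonneg (norm_nonneg h)]; ring

end L2

section L3
open scoped Topology
variable {d : ℕ} {f : Euc d → ℝ}

lemma tendsto_seq_r {r : ℝ} (hr : 0 < r) :
    Tendsto (fun k : ℕ => r * (1 - 1/((k:ℝ)+2))) atTop (𝓝 r) := by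
  have h2 : Tendsto (fun k : ℕ => 1/((k:ℝ)+2)) atTop (𝓝 0) := by
    have := (tendsto_one_div_add_atTop_nhds_zero_nat (𝕜 := ℝ)).comp (tendsto_add_atTop_nat 1)
    refine this.congr fun k => ?_
    simp [Function.comp]
    push_cast
    ring_nf
  have : Tendsto (fun k : ℕ => r * (1 - 1/((k:ℝ)+2))) atTop (𝓝 (r * (1 - 0))) :=
    tendsto_const_nhds.mul (tendsto_const_nhds.sub h2)
  simpa using this

lemma seq_r_pos {r : ℝ} (hr : 0 < r) (k : ℕ) : 0 < r * (1 - 1/((k:ℝ)+2)) := by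
  have hk0 : (0:ℝ) ≤ (k:ℝ) := Nat.cast_nonneg k
  have hk2 : (2:ℝ) ≤ (k:ℝ) + 2 := by linarith
  have : 1/((k:ℝ)+2) ≤ 1/2 := by
    apply one_div_le_one_div_of_le <;> linarith
  have h0 : (0:ℝ) < 1 - 1/((k:ℝ)+2) := by linarith
  positivity

lemma seq_r_lt {r : ℝ} (hr : 0 < r) (k : ℕ) : r * (1 - 1/((k:ℝ)+2)) < r := by
  have hk2 : (0:ℝ) < (k:ℝ) + 2 := by positivity
  have : 0 < 1/((k:ℝ)+2) := by positivity
  nlinarith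

/-- bump approximations to the indicator of `ball c r` -/
def bumpSeq {d : ℕ} (c : Euc d) {r : ℝ} (hr : 0 < r) (k : ℕ) : ContDiffBump c :=
  ⟨r * (1 - 1/((k:ℝ)+2)), r, seq_r_pos hr k, seq_r_lt hr k⟩

lemma tendsto_integral_bump (hfb : MemLp f ⊤ volume) {c : Euc d} {r : ℝ} (hr : 0 < r)
    (a : Euc d) :
    Tendsto (fun k : ℕ => ∫ y, f y * (bumpSeq c hr k) (y - a)) atTop
      (𝓝 (∫ y in ball (c + a) r, f y)) := by
  have fmeas := hfb.aestronglyMeasurable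
  have hmem : ∀ y : Euc d, y - a ∈ ball c r ↔ y ∈ ball (c + a) r := by
    intro y
    simp only [mem_ball, dist_eq_norm]
    constructor <;> intro hb <;> [skip; skip] <;>
      · convert hb using 2
        abel
  have hlim : (∫ y in ball (c + a) r, f y) = ∫ y, (ball (c+a) r).indicator f y := by
    rw [integral_indicator measurableSet_ball]
  rw [hlim]
  refine tendsto_integral_of_dominated_convergence
    ((closedBall (c+a) r).indicator fun y => |f y|) ?_ ?_ ?_ ?_
  · intro k
    exact fmeas.mul (((bumpSeq c hr k).continuous).comp
      (continuous_id.sub continuous_const)).aestronglyMeasurable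
  · rw [integrable_indicator_iff measurableSet_closedBall]
    exact (integrableOn_of_memtop hfb measure_closedBall_lt_top.ne).norm
  · intro k
    refine Eventually.of_forall fun y => ?_
    by_cases hy : y ∈ closedBall (c+a) r
    · rw [indicator_of_mem hy, norm_mul]
      calc ‖f y‖ * ‖(bumpSeq c hr k) (y - a)‖ ≤ ‖f y‖ * 1 := by
            apply mul_le_mul_of_nonneg_left _ (norm_nonneg _)
            rw [Real.norm_eq_abs, abs_of_nonneg (bumpSeq c hr k).nonneg]
            exact (bumpSeq c hr k).le_one
        _ = |f y| := by rw [mul_one, Real.norm_eq_abs]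
    · rw [indicator_of_notMem hy]
      have hy' : y - a ∉ Function.support (bumpSeq c hr k) := by
        rw [(bumpSeq c hr k).support_eq]
        intro hmem'
        exact hy (ball_subset_closedBall ((hmem y).mp hmem'))
      simp [Function.notMem_support.mp hy']
  · refine Eventually.of_forall fun y => ?_
    by_cases hy : y ∈ ball (c+a) r
    · rw [indicator_of_mem hy]
      have hy' : y - a ∈ ball c r := (hmem y).mpr hy
      have hev : ∀ᶠ k : ℕ in atTop, f y * (bumpSeq c hr k) (y - a) = f y := by
        have hlt : dist (y - a) c < r := by simpa [mem_ball] using hy'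
        filter_upwards [(tendsto_seq_r hr).eventually (eventually_ge_nhds hlt)] with k hk
        have hk' : y - a ∈ closedBall c (bumpSeq c hr k).rIn := by
          show dist (y - a) c ≤ (bumpSeq c hr k).rIn
          show dist (y - a) c ≤ r * (1 - 1/((k:ℝ)+2))
          exact hk
        rw [(bumpSeq c hr k).one_of_mem_closedBall hk', mul_one]
      refine Tendsto.congr' (Eventually.mono hev fun k hk => hk.symm) tendsto_const_nhds
    · rw [indicator_of_notMem hy]
      have : ∀ k : ℕ, f y * (bumpSeq c hr k) (y - a) = 0 := by
        intro k
        have hy' : y - a ∉ Function.support (bumpSeq c hr k) := by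
          rw [(bumpSeq c hr k).support_eq]
          intro hmem'
          exact hy ((hmem y).mp hmem')
        simp [Function.notMem_support.mp hy']
      simpa [this] using tendsto_const_nhds (x := (0:ℝ)) (f := atTop (α := ℕ))

lemma ball_shift_le (hfb : MemLp f ⊤ volume) (hBV : BddAbove (divSet f))
    {c : Euc d} {r : ℝ} (hr : 0 < r) (h : Euc d) :
    (∫ y in ball (c + h) r, f y) - (∫ y in ball c r, f y) ≤ ‖h‖ * variation f := by
  have h1 := tendsto_integral_bump (c := c) hfb hr h
  have h0 := tendsto_integral_bump (c := c) hfb hr (0 : Euc d)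
  have h0' : Tendsto (fun k : ℕ => ∫ y, f y * (bumpSeq c hr k) y) atTop
      (𝓝 (∫ y in ball c r, f y)) := by
    have : (fun k : ℕ => ∫ y, f y * (bumpSeq c hr k) (y - 0))
        = fun k : ℕ => ∫ y, f y * (bumpSeq c hr k) y := by
      funext k; simp
    rw [this] at h0
    simpa using h0
  refine le_of_tendsto (h1.sub h0') (Eventually.of_forall fun k => ?_)
  refine shift_le_variation hfb hBV ((bumpSeq c hr k).contDiff)
    ((bumpSeq c hr k).hasCompactSupport) (fun y => ?_) h
  rw [abs_of_nonneg (bumpSeq c hr k).nonneg]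
  exact (bumpSeq c hr k).le_one

end L3

section helpers
variable {d : ℕ} {f : Euc d → ℝ}

def muSet (d : ℕ) (α : ℝ) (f : Euc d → ℝ) (x : Euc d) : Set ℝ :=
  {v | ∃ z : Euc d, ∃ r : ℝ, 0 < r ∧ x ∈ ball z r ∧ v = r ^ α * setAvg (ball z r) f}

lemma Mu_eq (d : ℕ) (α : ℝ) (f : Euc d → ℝ) (x : Euc d) :
    Mu d α f x = sSup (muSet d α f x) := rfl

lemma volBall_toReal (z : Euc d) {r : ℝ} (hr : 0 < r) :
    (volume (ball z r)).toReal = r ^ (d:ℕ) * (volume (ball (0 : Euc d) 1)).toReal := by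
  rw [Measure.addHaar_ball_of_pos _ z hr, ENNReal.toReal_mul,
    ENNReal.toReal_ofReal (pow_nonneg hr.le _), finrank_euclideanSpace_fin]

lemma volBall_pos (z : Euc d) {r : ℝ} (hr : 0 < r) : 0 < (volume (ball z r)).toReal :=
  ENNReal.toReal_pos (measure_ball_pos _ _ hr).ne' measure_ball_lt_top.ne

lemma value_eq {α : ℝ} (z : Euc d) {r : ℝ} (hr : 0 < r) :
    r ^ α * setAvg (ball z r) f
      = (volume (ball (0 : Euc d) 1)).toReal⁻¹ * r ^ (α - (d:ℝ)) * (∫ y in ball z r, f y) := by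
  rw [setAvg, volBall_toReal z hr]
  have hσ := volBall_pos (0 : Euc d) one_pos
  have hrd : r ^ (d:ℕ) = r ^ ((d:ℕ):ℝ) := (Real.rpow_natCast r d).symm
  rw [hrd, Real.rpow_sub hr]
  have hrpow : r ^ ((d:ℕ):ℝ) ≠ 0 := (Real.rpow_pos_of_pos hr _).ne'
  field_simp

lemma ball_integral_nonneg (hf : 0 ≤ f) (s : Set (Euc d)) (hs : MeasurableSet s) :
    0 ≤ ∫ y in s, f y :=
  setIntegral_nonneg hs fun y _ => hf y

lemma setAvg_nonneg (hf : 0 ≤ f) (z : Euc d) (r : ℝ) : 0 ≤ setAvg (ball z r) f :=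
  mul_nonneg (inv_nonneg.mpr ENNReal.toReal_nonneg)
    (ball_integral_nonneg hf _ measurableSet_ball)

lemma setIntegral_ball_le_const (hfb : MemLp f ⊤ volume) (z : Euc d) (r : ℝ) :
    (∫ y in ball z r, f y) ≤ (eLpNorm f ⊤ volume).toReal * (volume (ball z r)).toReal := by
  have h := norm_setIntegral_le_of_norm_le_const_ae (s := ball z r) (μ := volume)
    measure_ball_lt_top (ae_restrict_of_ae (ae_bound_of_memtop hfb))
  calc (∫ y in ball z r, f y) ≤ ‖∫ y in ball z r, f y‖ := le_abs_self _
    _ ≤ (eLpNorm f ⊤ volume).toReal * (volume (ball z r)).toReal := h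

lemma setAvg_le_const (hfb : MemLp f ⊤ volume) (z : Euc d) {r : ℝ} (hr : 0 < r) :
    setAvg (ball z r) f ≤ (eLpNorm f ⊤ volume).toReal := by
  rw [setAvg]
  have hv := volBall_pos z hr
  rw [inv_mul_le_iff₀ hv]
  calc (∫ y in ball z r, f y)
      ≤ (eLpNorm f ⊤ volume).toReal * (volume (ball z r)).toReal :=
        setIntegral_ball_le_const hfb z r
    _ = (volume (ball z r)).toReal * (eLpNorm f ⊤ volume).toReal := mul_comm _ _

lemma value_nonneg (hf : 0 ≤ f) {α : ℝ} (z : Euc d) (r : ℝ) (x : Euc d) :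
    0 ≤ r ^ α * setAvg (ball z r) f := by
  rcases le_or_gt r 0 with hr | hr
  · have : ball z r = ∅ := ball_eq_empty.mpr hr
    simp [setAvg, this]
  · exact mul_nonneg (Real.rpow_nonneg hr.le α) (setAvg_nonneg hf z r)

end helpers

section core
variable {d : ℕ}

lemma muSet_nonempty (α : ℝ) (f : Euc d → ℝ) (x : Euc d) : (muSet d α f x).Nonempty :=
  ⟨1 ^ α * setAvg (ball x 1) f, x, 1, one_pos, mem_ball_self one_pos, rfl⟩

lemma core (α : ℝ) (hα : 0 < α) (hαd : α < d) (f : Euc d → ℝ)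
    (hf : 0 ≤ f) (hfb : MemLp f ⊤ volume) (hBV : BddAbove (divSet f))
    (z : Euc d) (R : ℝ) (hR : 0 < R) (hpos : ∀ x ∈ ball z R, 0 < Mu d α f x) :
    ∃ r0 : ℝ, 0 < r0 ∧
      (∀ x ∈ ball z R, Mu d α f x =
        sSup {v | ∃ z' : Euc d, ∃ r' : ℝ, r0 ≤ r' ∧ x ∈ ball z' r' ∧
          v = r' ^ α * setAvg (ball z' r') f}) ∧
      LipschitzOnWith
        (Real.toNNReal ((volume (ball (0 : Euc d) 1)).toReal⁻¹ * r0 ^ (α - d) * variation f))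
        (Mu d α f) (ball z R) := by
  set σ : ℝ := (volume (ball (0 : Euc d) 1)).toReal with hσ_def
  have hσ : 0 < σ := volBall_pos (0 : Euc d) one_pos
  set C : ℝ := (eLpNorm f ⊤ volume).toReal with hC_def
  have hC0 : 0 ≤ C := ENNReal.toReal_nonneg
  -- boundedness of the defining sets
  have hbdd : ∀ x ∈ ball z R, BddAbove (muSet d α f x) := by
    intro x hx
    by_contra hb
    have h0 := Real.sSup_of_not_bddAbove hb
    have := hpos x hx
    rw [Mu_eq, h0] at this
    exact lt_irrefl _ this
  -- a ball with positive integral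
  obtain ⟨c, ρ, hρ, hzρ, hI0⟩ :
      ∃ c : Euc d, ∃ ρ : ℝ, 0 < ρ ∧ z ∈ ball c ρ ∧ 0 < ∫ y in ball c ρ, f y := by
    have hz := hpos z (mem_ball_self hR)
    rw [Mu_eq] at hz
    by_contra hcon
    push_neg at hcon
    have hle : ∀ v ∈ muSet d α f z, v ≤ 0 := by
      rintro v ⟨c, ρ, hρ, hzρ, rfl⟩
      have hint : (∫ y in ball c ρ, f y) ≤ 0 := hcon c ρ hρ hzρ
      have hint' : (∫ y in ball c ρ, f y) = 0 :=
        le_antisymm hint (ball_integral_nonneg hf _ measurableSet_ball)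
      simp [setAvg, hint']
    have := Real.sSup_le hle le_rfl
    exact absurd (lt_of_lt_of_le hz this) (lt_irrefl 0)
  set I0 : ℝ := ∫ y in ball c ρ, f y with hI0_def
  -- a uniform positive lower bound for Mu on the ball
  set r1 : ℝ := dist z c + R + ρ with hr1_def
  have hr1 : 0 < r1 := by
    have := dist_nonneg (x := z) (y := c)
    dsimp [r1]; linarith
  have hρr1 : ρ ≤ r1 := by
    have := dist_nonneg (x := z) (y := c)
    dsimp [r1]; linarith
  have hmemr1 : ∀ x ∈ ball z R, x ∈ ball c r1 := by
    intro x hx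
    rw [mem_ball] at hx ⊢
    have := dist_triangle x z c
    dsimp [r1]; linarith
  set m : ℝ := r1 ^ α * setAvg (ball c r1) f with hm_def
  have hII : I0 ≤ ∫ y in ball c r1, f y := by
    apply setIntegral_mono_set (integrableOn_of_memtop hfb measure_ball_lt_top.ne)
      (Eventually.of_forall fun y => hf y)
    exact HasSubset.Subset.eventuallyLE (ball_subset_ball hρr1)
  have hm : 0 < m := by
    apply mul_pos (Real.rpow_pos_of_pos hr1 α)
    apply mul_pos (inv_pos.mpr (volBall_pos c hr1))
    exact lt_of_lt_of_le hI0 hII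
  have hmem_m : ∀ x ∈ ball z R, m ∈ muSet d α f x := fun x hx =>
    ⟨c, r1, hr1, hmemr1 x hx, rfl⟩
  have hmle : ∀ x ∈ ball z R, m ≤ Mu d α f x := fun x hx =>
    le_csSup (hbdd x hx) (hmem_m x hx)
  -- choice of r0
  set r0 : ℝ := min r1 ((m / (C + 1)) ^ α⁻¹) with hr0_def
  have hmC : 0 < m / (C + 1) := div_pos hm (by linarith)
  have hr00 : 0 < r0 := lt_min hr1 (Real.rpow_pos_of_pos hmC _)
  have hr0r1 : r0 ≤ r1 := min_le_left _ _
  have hkey : r0 ^ α * C ≤ m := by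
    have h1 : r0 ^ α ≤ m / (C + 1) := by
      calc r0 ^ α ≤ ((m / (C + 1)) ^ α⁻¹) ^ α :=
            Real.rpow_le_rpow hr00.le (min_le_right _ _) hα.le
        _ = m / (C + 1) := by
            rw [← Real.rpow_mul hmC.le, inv_mul_cancel₀ hα.ne', Real.rpow_one]
    calc r0 ^ α * C ≤ (m / (C + 1)) * C :=
          mul_le_mul_of_nonneg_right h1 hC0
      _ ≤ (m / (C + 1)) * (C + 1) := by
          apply mul_le_mul_of_nonneg_left (by linarith) hmC.le
      _ = m := div_mul_cancel₀ m (by linarith)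
  -- the representation
  have hrepr : ∀ x ∈ ball z R, Mu d α f x =
      sSup {v | ∃ z' : Euc d, ∃ r' : ℝ, r0 ≤ r' ∧ x ∈ ball z' r' ∧
        v = r' ^ α * setAvg (ball z' r') f} := by
    intro x hx
    set A := {v | ∃ z' : Euc d, ∃ r' : ℝ, r0 ≤ r' ∧ x ∈ ball z' r' ∧
        v = r' ^ α * setAvg (ball z' r') f} with hA_def
    have hsub : A ⊆ muSet d α f x := by
      rintro v ⟨z', r', hr', hxz, rfl⟩
      exact ⟨z', r', lt_of_lt_of_le hr00 hr', hxz, rfl⟩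
    have hmA : m ∈ A := ⟨c, r1, hr0r1, hmemr1 x hx, rfl⟩
    have hAne : A.Nonempty := ⟨m, hmA⟩
    have hAbdd : BddAbove A := (hbdd x hx).mono hsub
    apply le_antisymm
    · rw [Mu_eq]
      apply csSup_le (muSet_nonempty α f x)
      rintro v ⟨z', r', hr'pos, hxz, rfl⟩
      rcases le_or_gt r0 r' with hcase | hcase
      · exact le_csSup hAbdd ⟨z', r', hcase, hxz, rfl⟩
      · calc r' ^ α * setAvg (ball z' r') f
            ≤ r' ^ α * C := mul_le_mul_of_nonneg_left
              (setAvg_le_const hfb z' hr'pos) (Real.rpow_nonneg hr'pos.le α)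
          _ ≤ r0 ^ α * C := mul_le_mul_of_nonneg_right
              (Real.rpow_le_rpow hr'pos.le hcase.le hα.le) hC0
          _ ≤ m := hkey
          _ ≤ sSup A := le_csSup hAbdd hmA
    · exact csSup_le_csSup (hbdd x hx) hAne hsub
  -- the Lipschitz estimate
  set κ : ℝ := σ⁻¹ * r0 ^ (α - (d:ℝ)) * variation f with hκ_def
  have hV0 : 0 ≤ variation f := variation_nonneg hBV
  have hκ0 : 0 ≤ κ :=
    mul_nonneg (mul_nonneg (inv_nonneg.mpr hσ.le) (Real.rpow_nonneg hr00.le _)) hV0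
  have hhalf : ∀ x ∈ ball z R, ∀ x' ∈ ball z R,
      Mu d α f x - Mu d α f x' ≤ κ * dist x x' := by
    intro x hx x' hx'
    rw [hrepr x hx, sub_le_iff_le_add]
    have hmA' : m ∈ {v | ∃ z' : Euc d, ∃ r' : ℝ, r0 ≤ r' ∧ x ∈ ball z' r' ∧
        v = r' ^ α * setAvg (ball z' r') f} := ⟨c, r1, hr0r1, hmemr1 x hx, rfl⟩
    apply csSup_le ⟨m, hmA'⟩
    rintro v ⟨z', r', hr', hxz, rfl⟩
    set h : Euc d := x' - x with hh_def
    have hr'pos : 0 < r' := lt_of_lt_of_le hr00 hr'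
    have hx'mem : x' ∈ ball (z' + h) r' := by
      rw [mem_ball, dist_eq_norm]
      have heq : x' - (z' + h) = x - z' := by rw [hh_def]; abel
      rw [heq, ← dist_eq_norm]
      exact hxz
    have hv' : r' ^ α * setAvg (ball (z' + h) r') f ≤ Mu d α f x' :=
      le_csSup (hbdd x' hx') ⟨z' + h, r', hr'pos, hx'mem, rfl⟩
    have hshift : (∫ y in ball z' r', f y) - (∫ y in ball (z' + h) r', f y)
        ≤ ‖h‖ * variation f := by
      have hb := ball_shift_le (c := z' + h) hfb hBV hr'pos (-h)
      have heq : z' + h + -h = z' := by abel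
      rw [heq, norm_neg] at hb
      exact hb
    have hcoef : 0 ≤ σ⁻¹ * r' ^ (α - (d:ℝ)) :=
      mul_nonneg (inv_nonneg.mpr hσ.le) (Real.rpow_nonneg hr'pos.le _)
    have hval : r' ^ α * setAvg (ball z' r') f
        - r' ^ α * setAvg (ball (z' + h) r') f ≤ κ * ‖h‖ := by
      rw [value_eq z' hr'pos, value_eq (z' + h) hr'pos]
      calc σ⁻¹ * r' ^ (α - (d:ℝ)) * (∫ y in ball z' r', f y)
            - σ⁻¹ * r' ^ (α - (d:ℝ)) * (∫ y in ball (z' + h) r', f y)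
          = σ⁻¹ * r' ^ (α - (d:ℝ)) *
              ((∫ y in ball z' r', f y) - (∫ y in ball (z' + h) r', f y)) := by ring
        _ ≤ σ⁻¹ * r' ^ (α - (d:ℝ)) * (‖h‖ * variation f) :=
            mul_le_mul_of_nonneg_left hshift hcoef
        _ ≤ σ⁻¹ * r0 ^ (α - (d:ℝ)) * (‖h‖ * variation f) := by
            apply mul_le_mul_of_nonneg_right _ (mul_nonneg (norm_nonneg _) hV0)
            apply mul_le_mul_of_nonneg_left _ (inv_nonneg.mpr hσ.le)
            exact Real.rpow_le_rpow_of_nonpos hr00 hr' (by linarith)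
        _ = κ * ‖h‖ := by rw [hκ_def]; ring
    have hdist : ‖h‖ = dist x x' := by
      rw [hh_def, ← dist_eq_norm, dist_comm]
    have := hval
    rw [hdist] at this
    linarith [hv']
  refine ⟨r0, hr00, hrepr, ?_⟩
  rw [lipschitzOnWith_iff_dist_le_mul]
  intro x hx x' hx'
  have hco : ((Real.toNNReal (σ⁻¹ * r0 ^ (α - (d:ℝ)) * variation f) : ℝ≥0) : ℝ) = κ := by
    rw [hκ_def]
    exact Real.coe_toNNReal _ hκ0
  rw [Real.dist_eq]
  have h1 := hhalf x hx x' hx'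
  have h2 := hhalf x' hx' x hx
  rw [dist_comm x' x] at h2
  rw [abs_sub_le_iff]
  constructor
  · calc Mu d α f x - Mu d α f x' ≤ κ * dist x x' := h1
      _ = ↑(Real.toNNReal (σ⁻¹ * r0 ^ (α - (d:ℝ)) * variation f)) * dist x x' := by rw [hco]
  · calc Mu d α f x' - Mu d α f x ≤ κ * dist x x' := h2
      _ = ↑(Real.toNNReal (σ⁻¹ * r0 ^ (α - (d:ℝ)) * variation f)) * dist x x' := by rw [hco]

end core

section final
variable {d : ℕ}

lemma bdd_transfer (α : ℝ) (hα : 0 < α) (hαd : α < d) (f : Euc d → ℝ)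
    (hf : 0 ≤ f) (hfb : MemLp f ⊤ volume) (x y : Euc d)
    (hbdd : BddAbove (muSet d α f y)) : BddAbove (muSet d α f x) := by
  set σ : ℝ := (volume (ball (0 : Euc d) 1)).toReal with hσ_def
  have hσ : 0 < σ := volBall_pos (0 : Euc d) one_pos
  set C : ℝ := (eLpNorm f ⊤ volume).toReal with hC_def
  have hC0 : 0 ≤ C := ENNReal.toReal_nonneg
  obtain ⟨M, hM⟩ := hbdd
  set D : ℝ := dist y x with hD_def
  have hD0 : 0 ≤ D := dist_nonneg
  set M' : ℝ := max M 0 with hM'_def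
  have hM'0 : 0 ≤ M' := le_max_right _ _
  refine ⟨max C (M' * (1 + D) ^ ((d:ℝ) - α)), ?_⟩
  rintro v ⟨zc, r, hr, hxz, rfl⟩
  rcases le_or_gt r 1 with hr1 | hr1
  · have h1 : r ^ α * setAvg (ball zc r) f ≤ r ^ α * C :=
      mul_le_mul_of_nonneg_left (setAvg_le_const hfb zc hr) (Real.rpow_nonneg hr.le α)
    have h2 : r ^ α ≤ 1 := Real.rpow_le_one hr.le hr1 hα.le
    have h3 : r ^ α * C ≤ C := by
      calc r ^ α * C ≤ 1 * C := mul_le_mul_of_nonneg_right h2 hC0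
        _ = C := one_mul C
    exact le_max_of_le_left (h1.trans h3)
  · -- large radius: compare with a ball around y
    have hrpos : (0:ℝ) < r := by linarith
    have hrD : 0 < r + D := by linarith
    have hymem : y ∈ ball zc (r + D) := by
      rw [mem_ball]
      have h4 := dist_triangle y x zc
      rw [mem_ball] at hxz
      linarith
    have hw : (r + D) ^ α * setAvg (ball zc (r + D)) f ≤ M' :=
      le_max_of_le_left (hM ⟨zc, r + D, hrD, hymem, rfl⟩)
    have hII : (∫ u in ball zc r, f u) ≤ ∫ u in ball zc (r + D), f u := by
      apply setIntegral_mono_set (integrableOn_of_memtop hfb measure_ball_lt_top.ne)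
        (Eventually.of_forall fun u => hf u)
      exact HasSubset.Subset.eventuallyLE (ball_subset_ball (by linarith))
    have hI0 : 0 ≤ ∫ u in ball zc r, f u := ball_integral_nonneg hf _ measurableSet_ball
    set factor : ℝ := ((r + D) / r) ^ ((d:ℝ) - α) with hfactor_def
    have hfac0 : 0 ≤ factor := Real.rpow_nonneg (by positivity) _
    have hfaceq : (r + D) ^ (α - (d:ℝ)) * factor = r ^ (α - (d:ℝ)) := by
      rw [hfactor_def, Real.div_rpow hrD.le hrpos.le]
      calc (r + D) ^ (α - (d:ℝ)) * ((r + D) ^ ((d:ℝ) - α) / r ^ ((d:ℝ) - α))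
          = ((r + D) ^ (α - (d:ℝ)) * (r + D) ^ ((d:ℝ) - α)) / r ^ ((d:ℝ) - α) := by
            ring
        _ = (r + D) ^ ((α - (d:ℝ)) + ((d:ℝ) - α)) / r ^ ((d:ℝ) - α) := by
            rw [← Real.rpow_add hrD]
        _ = 1 / r ^ ((d:ℝ) - α) := by norm_num
        _ = r ^ (α - (d:ℝ)) := by
            rw [one_div, ← Real.rpow_neg hrpos.le]
            ring_nf
    have hvfac : r ^ α * setAvg (ball zc r) f
        = (σ⁻¹ * (r + D) ^ (α - (d:ℝ)) * (∫ u in ball zc r, f u)) * factor := by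
      rw [value_eq zc hrpos, ← hσ_def, ← hfaceq]
      ring
    have hcoef : 0 ≤ σ⁻¹ * (r + D) ^ (α - (d:ℝ)) :=
      mul_nonneg (inv_nonneg.mpr hσ.le) (Real.rpow_nonneg hrD.le _)
    have hwval : σ⁻¹ * (r + D) ^ (α - (d:ℝ)) * (∫ u in ball zc (r + D), f u)
        = (r + D) ^ α * setAvg (ball zc (r + D)) f := by
      rw [value_eq zc hrD, ← hσ_def]
    have hfacle : factor ≤ (1 + D) ^ ((d:ℝ) - α) := by
      apply Real.rpow_le_rpow (by positivity) _ (by linarith)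
      have hbase : (r + D) / r = 1 + D / r := by field_simp
      rw [hbase]
      have : D / r ≤ D := by
        rcases eq_or_lt_of_le hD0 with h0 | h0
        · rw [← h0]; simp
        · rw [div_le_iff₀ hrpos]
          nlinarith
      linarith
    calc r ^ α * setAvg (ball zc r) f
        = (σ⁻¹ * (r + D) ^ (α - (d:ℝ)) * (∫ u in ball zc r, f u)) * factor := hvfac
      _ ≤ (σ⁻¹ * (r + D) ^ (α - (d:ℝ)) * (∫ u in ball zc (r + D), f u)) * factor := by
          apply mul_le_mul_of_nonneg_right _ hfac0
          exact mul_le_mul_of_nonneg_left hII hcoef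
      _ = ((r + D) ^ α * setAvg (ball zc (r + D)) f) * factor := by rw [hwval]
      _ ≤ M' * factor := mul_le_mul_of_nonneg_right hw hfac0
      _ ≤ M' * (1 + D) ^ ((d:ℝ) - α) := mul_le_mul_of_nonneg_left hfacle hM'0
      _ ≤ max C (M' * (1 + D) ^ ((d:ℝ) - α)) := le_max_right _ _

end final

theorem stmt3 (d : ℕ) (α : ℝ) (hα : 0 < α) (hαd : α < d)
    (f : Euc d → ℝ) (hf : 0 ≤ f) (hfb : MemLp f ⊤ volume)
    (hBV : BddAbove (divSet f)) :
    LocallyLipschitz (Mu d α f) ∧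
    ∀ (z : Euc d) (R : ℝ), 0 < R → (∀ x ∈ ball z R, 0 < Mu d α f x) →
      ∃ r0 : ℝ, 0 < r0 ∧
        (∀ x ∈ ball z R, Mu d α f x =
          sSup {v | ∃ z' : Euc d, ∃ r' : ℝ, r0 ≤ r' ∧ x ∈ ball z' r' ∧
            v = r' ^ α * setAvg (ball z' r') f}) ∧
        LipschitzOnWith
          (Real.toNNReal ((volume (ball (0 : Euc d) 1)).toReal⁻¹ * r0 ^ (α - d) * variation f))
          (Mu d α f) (ball z R) := by
  constructor
  · -- locally Lipschitz
    by_cases hb : ∀ x : Euc d, BddAbove (muSet d α f x)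
    · by_cases hzero : ∀ (c : Euc d) (ρ : ℝ), 0 < ρ → (∫ y in ball c ρ, f y) = 0
      · -- f has zero integral on every ball : Mu is constant zero
        have hMu : Mu d α f = fun _ => 0 := by
          funext x
          rw [Mu_eq]
          have : muSet d α f x = {0} := by
            apply Subset.antisymm
            · rintro v ⟨zc, r, hr, hxz, rfl⟩
              have h0 : (∫ y in ball zc r, f y) = 0 := hzero zc r hr
              simp [setAvg, h0]
            · rintro v rfl
              refine ⟨x, 1, one_pos, mem_ball_self one_pos, ?_⟩
              have h0 : (∫ y in ball x 1, f y) = 0 := hzero x 1 one_pos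
              simp [setAvg, h0]
          rw [this, csSup_singleton]
        rw [hMu]
        exact (LipschitzWith.const' (0:ℝ) (K := 0)).locallyLipschitz
      · -- some ball has positive integral : Mu is everywhere positive
        push_neg at hzero
        obtain ⟨c, ρ, hρ, hne⟩ := hzero
        have hI0 : 0 < ∫ y in ball c ρ, f y :=
          lt_of_le_of_ne (ball_integral_nonneg hf _ measurableSet_ball) (Ne.symm hne)
        have hpos_all : ∀ x : Euc d, 0 < Mu d α f x := by
          intro x
          set r : ℝ := dist x c + ρ with hr_def
          have hrpos : 0 < r := by have := dist_nonneg (x := x) (y := c); dsimp [r]; linarith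
          have hxmem : x ∈ ball c r := by rw [mem_ball]; dsimp [r]; linarith
          have hII : (∫ y in ball c ρ, f y) ≤ ∫ y in ball c r, f y := by
            apply setIntegral_mono_set (integrableOn_of_memtop hfb measure_ball_lt_top.ne)
              (Eventually.of_forall fun y => hf y)
            exact HasSubset.Subset.eventuallyLE (ball_subset_ball (by dsimp [r]; linarith [dist_nonneg (x := x) (y := c)]))
          have hv : 0 < r ^ α * setAvg (ball c r) f := by
            apply mul_pos (Real.rpow_pos_of_pos hrpos α)
            apply mul_pos (inv_pos.mpr (volBall_pos c hrpos))
            exact lt_of_lt_of_le hI0 hII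
          calc (0:ℝ) < r ^ α * setAvg (ball c r) f := hv
            _ ≤ Mu d α f x := le_csSup (hb x) ⟨c, r, hrpos, hxmem, rfl⟩
        intro x
        obtain ⟨r0, _, _, lip⟩ := core α hα hαd f hf hfb hBV x 1 one_pos
          (fun y _ => hpos_all y)
        exact ⟨_, ball x 1, ball_mem_nhds x one_pos, lip⟩
    · -- some defining set is unbounded : Mu is constant zero
      push_neg at hb
      obtain ⟨x₀, hx₀⟩ := hb
      have hall : ∀ y : Euc d, ¬BddAbove (muSet d α f y) := by
        intro y hy
        exact hx₀ (bdd_transfer α hα hαd f hf hfb x₀ y hy)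
      have hMu : Mu d α f = fun _ => 0 := by
        funext x
        rw [Mu_eq]
        exact Real.sSup_of_not_bddAbove (hall x)
      rw [hMu]
      exact (LipschitzWith.const' (0:ℝ) (K := 0)).locallyLipschitz
  · intro z R hR hpos
    exact core α hα hαd f hf hfb hBV z R hR hpos
end
end
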